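/- Let (G, I, R, ι, ub) be an instance of anonymous refugee housing with upper-bounds and let h ∈ I be an intolerant inhabitant, i.e., ub(h) = 0. Let F = {ι(h)} ∪ (N_G(ι(h)) ∩ V_U) be the set consisting of h's vertex together with all empty vertices in its neighbourhood. Then (G, I, R, ι, ub) admits an inhabitants-respecting housing of size R if and only if the instance (G \ F, I \ {h}, R, ι, ub) obtained by deleting the vertices of F from G and removing the inhabitant h (with ι and ub restricted to I \ {h}) admits an inhabitants-respecting housing of size R. -/
import Mathlib


/-- Removing an intolerant inhabitant `h0` (one with
`ub h0 = 0`) together with its vertex and all empty vertices in its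
neighbourhood (the set `F`) preserves the (non-)existence of an
inhabitants-respecting housing of size `R`.  The reduced instance lives on
the induced subgraph `G'` on the vertices outside `F`, with inhabitant set
`I \ {h0}` and the assignment `ι'` agreeing with `ι`. -/
theorem remove_intolerant_inhabitant
    {V I : Type*} [Fintype V] [DecidableEq V] [Fintype I] [DecidableEq I]
    (G : SimpleGraph V) [DecidableRel G.Adj]
    (ι : I → V) (hinj : Function.Injective ι)
    (ub : I → ℕ) (R : ℕ)
    (hsize : Fintype.card I + R ≤ Fintype.card V)
    (h0 : I) (hub0 : ub h0 = 0)
    (F : Finset V)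
    (hF : ∀ v, v ∈ F ↔ v = ι h0 ∨ (G.Adj (ι h0) v ∧ ∀ h, ι h ≠ v))
    (G' : SimpleGraph {v : V // v ∉ F}) [DecidableRel G'.Adj]
    (hG' : ∀ u v : {v : V // v ∉ F}, G'.Adj u v ↔ G.Adj u.1 v.1)
    (ι' : ∀ h : I, h ≠ h0 → {v : V // v ∉ F})
    (hι' : ∀ (h : I) (hh : h ≠ h0), (ι' h hh).1 = ι h) :
    (∃ π : Finset V,
        (∀ v ∈ π, ∀ h : I, ι h ≠ v) ∧ π.card = R ∧
        ∀ h : I, (π.filter (fun v => G.Adj (ι h) v)).card ≤ ub h) ↔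
    (∃ π' : Finset {v : V // v ∉ F},
        (∀ v ∈ π', ∀ h : I, h ≠ h0 → ι h ≠ v.1) ∧ π'.card = R ∧
        ∀ (h : I) (hh : h ≠ h0),
          (π'.filter (fun v => G'.Adj (ι' h hh) v)).card ≤ ub h) := by
  constructor
  · rintro ⟨π, hπ1, hπ2, hπ3⟩
    have hempty : ∀ v ∈ π, v ∉ F := by
      intro v hv hvF
      rcases (hF v).1 hvF with h | ⟨hadj, _⟩
      · exact hπ1 v hv h0 h.symm
      · have h1 := hπ3 h0
        rw [hub0, Nat.le_zero, Finset.card_eq_zero] at h1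
        have : v ∈ π.filter (fun v => G.Adj (ι h0) v) :=
          Finset.mem_filter.2 ⟨hv, hadj⟩
        rw [h1] at this
        exact absurd this (Finset.notMem_empty v)
    refine ⟨π.subtype (fun v => v ∉ F), ?_, ?_, ?_⟩
    · intro v hv h _
      exact hπ1 v.1 (Finset.mem_subtype.1 hv) h
    · rw [Finset.card_subtype, Finset.filter_true_of_mem hempty, hπ2]
    · intro h hh
      have : ((π.subtype (fun v => v ∉ F)).filter
          (fun v => G'.Adj (ι' h hh) v)).card
          = (π.filter (fun v => G.Adj (ι h) v)).card := by
        refine Finset.card_bij (fun v _ => v.1) ?_ ?_ ?_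
        · intro v hv
          rw [Finset.mem_filter] at hv ⊢
          refine ⟨Finset.mem_subtype.1 hv.1, ?_⟩
          have := (hG' _ _).1 hv.2
          rwa [hι'] at this
        · intro a _ b _ hab
          exact Subtype.ext hab
        · intro w hw
          rw [Finset.mem_filter] at hw
          refine ⟨⟨w, hempty w hw.1⟩, ?_, rfl⟩
          rw [Finset.mem_filter]
          exact ⟨Finset.mem_subtype.2 hw.1, (hG' _ _).2 (by rw [hι']; exact hw.2)⟩
      rw [this]
      exact hπ3 h
  · rintro ⟨π', hπ1, hπ2, hπ3⟩
    refine ⟨π'.map ⟨Subtype.val, Subtype.val_injective⟩, ?_, ?_, ?_⟩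
    · intro v hv h hvh
      rw [Finset.mem_map] at hv
      obtain ⟨x, hx, rfl⟩ := hv
      by_cases hh : h = h0
      · exact x.2 ((hF x.1).2 (Or.inl (hh ▸ hvh).symm))
      · exact hπ1 x hx h hh hvh
    · rw [Finset.card_map, hπ2]
    · intro h
      by_cases hh : h = h0
      · rw [hh, hub0, Nat.le_zero, Finset.card_eq_zero, Finset.eq_empty_iff_forall_notMem]
        intro v hv
        rw [Finset.mem_filter, Finset.mem_map] at hv
        obtain ⟨⟨x, hx, rfl⟩, hadj⟩ := hv
        refine x.2 ((hF x.1).2 (Or.inr ⟨hadj, ?_⟩))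
        intro h' hh'
        by_cases hh0 : h' = h0
        · subst hh0
          exact G.ne_of_adj hadj hh'
        · exact hπ1 x hx h' hh0 hh'
      · have : ((π'.map ⟨Subtype.val, Subtype.val_injective⟩).filter
            (fun v => G.Adj (ι h) v)).card
            = (π'.filter (fun v => G'.Adj (ι' h hh) v)).card := by
          refine Finset.card_bij (fun v hv =>
            ⟨v, by
              rw [Finset.mem_filter, Finset.mem_map] at hv
              obtain ⟨⟨x, _, rfl⟩, _⟩ := hv
              exact x.2⟩) ?_ ?_ ?_
          · intro v hv
            rw [Finset.mem_filter] at hv ⊢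
            rw [Finset.mem_map] at hv
            obtain ⟨⟨x, hx, rfl⟩, hadj⟩ := hv
            exact ⟨hx, (hG' _ _).2 (by rw [hι']; exact hadj)⟩
          · intro a _ b _ hab
            exact congrArg Subtype.val hab
          · intro w hw
            rw [Finset.mem_filter] at hw
            refine ⟨w.1, ?_, rfl⟩
            rw [Finset.mem_filter, Finset.mem_map]
            refine ⟨⟨w, hw.1, rfl⟩, ?_⟩
            have := (hG' _ _).1 hw.2
            rwa [hι'] at this
        rw [this]
        exact hπ3 h hh
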